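/- On $\mathbb{C} P^{2n}$, the holomorphic bivector field $\pi$ induced by $\tilde{\pi} = \sum_{j=1}^{n} z_{2j-1} z_{2j}\, \partial_{z_{2j-1}} \wedge \partial_{z_{2j}}$ on $\mathbb{C}^{2n+1}$ is well defined (i.e. $\tilde{\pi}$ is invariant under the scaling action of $\mathbb{C}^*$ and descends to $\mathbb{C}P^{2n}$) and satisfies $[\pi, \pi] = 0$, i.e. $\pi$ is a holomorphic Poisson structure. -/

import Mathlib

/-- Directional (holomorphic) partial derivative `∂f/∂z_i` of `f : ℂ^N → ℂ`. -/
noncomputable def pd {N : ℕ} (f : (Fin N → ℂ) → ℂ) (z : Fin N → ℂ) (i : Fin N) : ℂ :=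
  fderiv ℂ f z (Pi.single i 1)

/-- The Poisson bracket of the bivector
`π̃ = ∑_{m=1}^{n} z_{2m-1} z_{2m} ∂_{z_{2m-1}} ∧ ∂_{z_{2m}}` on `ℂ^{2n+1}`
(0-indexed: pairs `(2m, 2m+1)` for `m < n`):
`{f,g}(z) = ∑_m z_{2m} z_{2m+1} (∂_{2m}f ∂_{2m+1}g - ∂_{2m+1}f ∂_{2m}g)`. -/
noncomputable def pbCP (n : ℕ) (f g : (Fin (2 * n + 1) → ℂ) → ℂ) :
    (Fin (2 * n + 1) → ℂ) → ℂ := fun z =>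
  ∑ m : Fin n,
    z (⟨2 * (m : ℕ), by have := m.isLt; omega⟩ : Fin (2 * n + 1)) *
    z (⟨2 * (m : ℕ) + 1, by have := m.isLt; omega⟩ : Fin (2 * n + 1)) *
    (pd f z ⟨2 * (m : ℕ), by have := m.isLt; omega⟩ *
       pd g z ⟨2 * (m : ℕ) + 1, by have := m.isLt; omega⟩ -
     pd f z ⟨2 * (m : ℕ) + 1, by have := m.isLt; omega⟩ *
       pd g z ⟨2 * (m : ℕ), by have := m.isLt; omega⟩)

/-!
STATEMENT 8: The holomorphic bivector
`π̃ = ∑_{j=1}^n z_{2j-1} z_{2j} ∂_{z_{2j-1}} ∧ ∂_{z_{2j}}` on `ℂ^{2n+1}` is invariant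
under the scaling action of `ℂ*` (so it descends to a well-defined holomorphic
bivector `π` on `ℂP^{2n}`) and satisfies `[π, π] = 0`, i.e. it is a holomorphic
Poisson structure.  Invariance is expressed by compatibility of the associated
bracket with scaling, and `[π̃, π̃] = 0` by the Jacobi identity for the bracket on
holomorphic functions.
-/
open Metric MeasureTheory Real Complex
namespace S8

variable {N : ℕ}

/-- restriction to a complex line has the expected derivative -/
lemma hasDerivAt_line {f : (Fin N → ℂ) → ℂ} (x v : Fin N → ℂ) (t₀ : ℂ)
    (hf : DifferentiableAt ℂ f (x + t₀ • v)) :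
    HasDerivAt (fun t : ℂ => f (x + t • v)) (fderiv ℂ f (x + t₀ • v) v) t₀ := by
  have hline : HasDerivAt (fun t : ℂ => x + t • v) v t₀ := by
    simpa using ((hasDerivAt_id t₀).smul_const v).const_add x
  exact (hf.hasFDerivAt.comp_hasDerivAt t₀ hline)

lemma pd_eq_deriv_line {f : (Fin N → ℂ) → ℂ} (x : Fin N → ℂ) (i : Fin N)
    (hf : DifferentiableAt ℂ f x) :
    pd f x i = deriv (fun t : ℂ => f (x + t • (Pi.single i 1 : Fin N → ℂ))) 0 := by
  have h := hasDerivAt_line x (Pi.single i 1 : Fin N → ℂ) 0 (by simpa using hf)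
  rw [h.deriv]
  simp [pd]

lemma norm_single_one (i : Fin N) : ‖(Pi.single i 1 : Fin N → ℂ)‖ = 1 := by
  simp [Pi.norm_single]

end S8

namespace S8
variable {N : ℕ}

/-- Cauchy estimate for a partial derivative. -/
lemma norm_pd_le {f : (Fin N → ℂ) → ℂ} (hf : Differentiable ℂ f) {z₀ x : Fin N → ℂ} {R M : ℝ}
    (hx : x ∈ closedBall z₀ R) (hM : ∀ w ∈ closedBall z₀ (R + 1), ‖f w‖ ≤ M) (i : Fin N) :
    ‖pd f x i‖ ≤ M := by
  set g : ℂ → ℂ := fun t => f (x + t • (Pi.single i 1 : Fin N → ℂ)) with hg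
  have hgd : Differentiable ℂ g := by
    intro t
    exact (hasDerivAt_line x _ t (hf _)).differentiableAt
  have h1 : pd f x i = deriv g 0 := pd_eq_deriv_line x i (hf x)
  rw [h1]
  have := Complex.norm_deriv_le_of_forall_mem_sphere_norm_le (c := (0:ℂ)) (R := 1) (C := M)
    one_pos hgd.diffContOnCl ?_
  · simpa using this
  · intro t ht
    apply hM
    simp only [mem_sphere_iff_norm, sub_zero] at ht
    have : ‖x + t • (Pi.single i 1 : Fin N → ℂ) - z₀‖ ≤ R + 1 := by
      calc ‖x + t • (Pi.single i 1 : Fin N → ℂ) - z₀‖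
          = ‖(x - z₀) + t • (Pi.single i 1 : Fin N → ℂ)‖ := by ring_nf
        _ ≤ ‖x - z₀‖ + ‖t • (Pi.single i 1 : Fin N → ℂ)‖ := norm_add_le _ _
        _ ≤ R + 1 := by
            gcongr
            · exact mem_closedBall_iff_norm.mp hx
            · rw [norm_smul, norm_single_one, ht]; simp
    exact mem_closedBall_iff_norm.mpr this

/-- operator norm of the derivative in terms of partials -/
lemma norm_fderiv_le_sum {f : (Fin N → ℂ) → ℂ} (x : Fin N → ℂ) :
    ‖fderiv ℂ f x‖ ≤ ∑ i : Fin N, ‖pd f x i‖ := by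
  apply ContinuousLinearMap.opNorm_le_bound _ (Finset.sum_nonneg fun i _ => norm_nonneg _)
  intro v
  have hv : v = ∑ i : Fin N, (v i) • (Pi.single i 1 : Fin N → ℂ) := by
    funext j
    rw [Finset.sum_apply]
    simp [Pi.single_apply, Finset.sum_ite_eq' Finset.univ j]
  calc ‖fderiv ℂ f x v‖ = ‖∑ i : Fin N, (v i) * pd f x i‖ := by
        conv_lhs => rw [hv]
        rw [map_sum]
        congr 1
        refine Finset.sum_congr rfl fun i _ => ?_
        simp [pd]
    _ ≤ ∑ i : Fin N, ‖(v i) * pd f x i‖ := norm_sum_le _ _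
    _ ≤ ∑ i : Fin N, ‖pd f x i‖ * ‖v‖ := by
        refine Finset.sum_le_sum fun i _ => ?_
        rw [norm_mul, mul_comm]
        gcongr
        exact norm_le_pi_norm v i
    _ = (∑ i : Fin N, ‖pd f x i‖) * ‖v‖ := by rw [Finset.sum_mul]

/-- an entire function is Lipschitz on balls, with an fderiv bound -/
lemma exists_lip {f : (Fin N → ℂ) → ℂ} (hf : Differentiable ℂ f) (z₀ : Fin N → ℂ) (R : ℝ) :
    ∃ C : ℝ, 0 ≤ C ∧ (∀ x ∈ closedBall z₀ R, ‖fderiv ℂ f x‖ ≤ C) ∧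
      ∀ x ∈ closedBall z₀ R, ∀ y ∈ closedBall z₀ R, ‖f x - f y‖ ≤ C * ‖x - y‖ := by
  obtain ⟨M, hM⟩ := (isCompact_closedBall z₀ (R + 1)).exists_bound_of_continuousOn
    hf.continuous.continuousOn
  set M' := max M 0 with hM'
  have hM'b : ∀ w ∈ closedBall z₀ (R + 1), ‖f w‖ ≤ M' := fun w hw => (hM w hw).trans (le_max_left _ _)
  refine ⟨∑ _i : Fin N, M', Finset.sum_nonneg fun _ _ => le_max_right _ _, ?_, ?_⟩
  · intro x hx
    exact (norm_fderiv_le_sum x).trans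
      (Finset.sum_le_sum fun i _ => norm_pd_le hf hx hM'b i)
  · intro x hx y hy
    exact (convex_closedBall z₀ R).norm_image_sub_le_of_norm_fderiv_le
      (fun w _ => hf w) (fun w hw => (norm_fderiv_le_sum w).trans
        (Finset.sum_le_sum fun i _ => norm_pd_le hf hw hM'b i)) hy hx

end S8

namespace S8
variable {N : ℕ}

/-- Cauchy integral representation for the partial derivative -/
lemma pd_rep {f : (Fin N → ℂ) → ℂ} (hf : Differentiable ℂ f) (i : Fin N) (x : Fin N → ℂ) :
    pd f x i = (2 * π * Complex.I : ℂ)⁻¹ • ∫ θ in (0:ℝ)..2*π,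
      (circleMap 0 1 θ * Complex.I * (circleMap 0 1 θ) ^ (-2 : ℤ)) •
        f (x + circleMap 0 1 θ • (Pi.single i 1 : Fin N → ℂ)) := by
  set g : ℂ → ℂ := fun t => f (x + t • (Pi.single i 1 : Fin N → ℂ)) with hgdef
  have hgd : Differentiable ℂ g := fun t => (hasDerivAt_line x _ t (hf _)).differentiableAt
  have h1 : pd f x i = deriv g 0 := pd_eq_deriv_line x i (hf x)
  rw [h1]
  have h2 := (hgd.diffContOnCl (s := ball (0:ℂ) 1)).deriv_eq_smul_circleIntegral one_pos
  have hne : (2 * π * Complex.I : ℂ) ≠ 0 := by simp [Real.pi_ne_zero, Complex.I_ne_zero]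
  rw [eq_inv_smul_iff₀ hne, ← h2]
  simp only [circleIntegral, deriv_circleMap, sub_zero, smul_smul]
  refine intervalIntegral.integral_congr fun θ _ => ?_
  simp only [hgdef]
  congr 1
  simp [zpow_neg]

lemma differentiable_pd {f : (Fin N → ℂ) → ℂ} (hf : Differentiable ℂ f) (i : Fin N) :
    Differentiable ℂ (fun x => pd f x i) := by
  intro z₀
  obtain ⟨C, hC0, hCb, hClip⟩ := exists_lip hf z₀ 2
  set w : ℝ → Fin N → ℂ := fun θ => circleMap 0 1 θ • (Pi.single i 1 : Fin N → ℂ) with hw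
  have hwnorm : ∀ θ, ‖w θ‖ = 1 := by
    intro θ
    rw [hw]
    simp [norm_smul, norm_single_one]
  set c : ℝ → ℂ := fun θ => circleMap 0 1 θ * Complex.I * (circleMap 0 1 θ) ^ (-2 : ℤ) with hc
  have hcnorm : ∀ θ, ‖c θ‖ = 1 := by
    intro θ
    simp [hc, norm_mul, norm_zpow, norm_circleMap_zero]
  set F : (Fin N → ℂ) → ℝ → ℂ := fun x θ => c θ • f (x + w θ) with hF
  set F' : ℝ → (Fin N → ℂ) →L[ℂ] ℂ := fun θ => c θ • fderiv ℂ f (z₀ + w θ) with hF'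
  set μ : Measure ℝ := volume.restrict (Set.Ioc 0 (2*π)) with hμ
  have hccont : Continuous c := by
    apply ((continuous_circleMap 0 1).mul continuous_const).mul
    exact ((continuous_circleMap 0 1).zpow₀ _ (fun θ => Or.inl (circleMap_ne_center one_ne_zero)))
  have hFcont : ∀ x, Continuous (fun θ => F x θ) := by
    intro x
    exact hccont.smul (hf.continuous.comp (continuous_const.add
      ((continuous_circleMap 0 1).smul continuous_const)))
  have hmem : ∀ x ∈ ball z₀ 1, ∀ θ, x + w θ ∈ closedBall z₀ 2 := by
    intro x hx θ
    rw [mem_closedBall_iff_norm]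
    calc ‖x + w θ - z₀‖ = ‖(x - z₀) + w θ‖ := by ring_nf
      _ ≤ ‖x - z₀‖ + ‖w θ‖ := norm_add_le _ _
      _ ≤ 1 + 1 := by
          gcongr
          · exact le_of_lt (mem_ball_iff_norm.mp hx)
          · exact (hwnorm θ).le
      _ = 2 := by norm_num
  have key := hasFDerivAt_integral_of_dominated_loc_of_lip (μ := μ) (F := F) (F' := F')
    (x₀ := z₀) (bound := fun _ => C) (s := ball z₀ 1) (ball_mem_nhds z₀ one_pos)
    (Filter.Eventually.of_forall fun x => ((hFcont x).aestronglyMeasurable))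
    ((hFcont z₀).integrableOn_Ioc)
    ?meas' ?lip ?bddint ?diff
  case meas' =>
    have hG : StronglyMeasurable (fun θ => fderiv ℂ f (z₀ + w θ)) :=
      ((measurable_fderiv ℂ f).comp
        (continuous_const.add ((continuous_circleMap 0 1).smul
          continuous_const)).measurable).stronglyMeasurable
    exact (hccont.stronglyMeasurable.smul hG).aestronglyMeasurable
  case lip =>
    refine Filter.Eventually.of_forall fun θ => ?_
    rw [lipschitzOnWith_iff_dist_le_mul]
    intro x hx y hy
    rw [dist_eq_norm, dist_eq_norm]
    have : F x θ - F y θ = c θ • (f (x + w θ) - f (y + w θ)) := by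
      simp only [hF, smul_eq_mul]; ring
    rw [this, norm_smul, hcnorm, one_mul]
    have hxy : x + w θ - (y + w θ) = x - y := by ring
    calc ‖f (x + w θ) - f (y + w θ)‖
        ≤ C * ‖x + w θ - (y + w θ)‖ :=
          hClip _ (hmem x hx θ) _ (hmem y hy θ)
      _ = C * ‖x - y‖ := by rw [hxy]
      _ ≤ (Real.nnabs C : ℝ) * ‖x - y‖ := by
          gcongr
          exact le_abs_self C
  case bddint => exact (integrableOn_const_iff).mpr (Or.inr (by simp [Real.pi_pos]; exact ENNReal.mul_lt_top ENNReal.ofNat_lt_top ENNReal.ofReal_lt_top))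
  case diff =>
    refine Filter.Eventually.of_forall fun θ => ?_
    have h1 : HasFDerivAt (fun x => f (x + w θ)) (fderiv ℂ f (z₀ + w θ)) z₀ := by
      have := (hf (z₀ + w θ)).hasFDerivAt.comp z₀ ((hasFDerivAt_id z₀).add_const (w θ))
      exact this
    exact h1.const_smul (c θ)
  -- now conclude
  have heq : (fun x => pd f x i) = fun x =>
      (2 * π * Complex.I : ℂ)⁻¹ • ∫ θ, F x θ ∂μ := by
    funext x
    rw [pd_rep hf i x, intervalIntegral.integral_of_le (by positivity : (0:ℝ) ≤ 2*π)]
  rw [heq]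
  exact (key.2.differentiableAt).fun_const_smul _

end S8

namespace S8
variable {N : ℕ}

lemma fderiv_eq_sum_pd {f : (Fin N → ℂ) → ℂ} (hf : Differentiable ℂ f) :
    (fun z => fderiv ℂ f z) = fun z => ∑ i : Fin N, pd f z i •
      (ContinuousLinearMap.proj i : (Fin N → ℂ) →L[ℂ] ℂ) := by
  funext z
  ext v
  simp only [ContinuousLinearMap.sum_apply, ContinuousLinearMap.smul_apply,
    ContinuousLinearMap.proj_apply, smul_eq_mul]
  have hv : v = ∑ i : Fin N, (v i) • (Pi.single i 1 : Fin N → ℂ) := by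
    funext j
    rw [Finset.sum_apply]
    simp [Pi.single_apply, Finset.sum_ite_eq' Finset.univ j]
  conv_lhs => rw [hv]
  rw [map_sum]
  refine Finset.sum_congr rfl fun i _ => ?_
  simp [pd, mul_comm]

lemma differentiable_fderiv {f : (Fin N → ℂ) → ℂ} (hf : Differentiable ℂ f) :
    Differentiable ℂ (fun z => fderiv ℂ f z) := by
  rw [fderiv_eq_sum_pd hf]
  apply Differentiable.fun_sum
  intro i _
  exact (differentiable_pd hf i).smul_const _

/-- Schwarz symmetry of second partials for entire functions -/
lemma pd_comm {f : (Fin N → ℂ) → ℂ} (hf : Differentiable ℂ f) (z : Fin N → ℂ) (i j : Fin N) :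
    pd (fun w => pd f w j) z i = pd (fun w => pd f w i) z j := by
  have hd := (differentiable_fderiv hf z).hasFDerivAt
  set f'' := fderiv ℂ (fun z => fderiv ℂ f z) z with hf''
  have hsymm := second_derivative_symmetric (fun y => (hf y).hasFDerivAt) hd
  have key : ∀ a b : Fin N, pd (fun w => pd f w b) z a = f'' (Pi.single a 1) (Pi.single b 1) := by
    intro a b
    have hA : (fun w => pd f w b) =
        fun w => (ContinuousLinearMap.apply ℂ ℂ ((Pi.single b 1 : Fin N → ℂ))) (fderiv ℂ f w) :=
      rfl
    set A := ContinuousLinearMap.apply ℂ ℂ ((Pi.single b 1 : Fin N → ℂ)) with hAdef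
    have h2 : HasFDerivAt (fun w => A (fderiv ℂ f w)) (A.comp f'') z :=
      A.hasFDerivAt.comp z hd
    rw [hA, pd, h2.fderiv]
    rfl
  rw [key i j, key j i, hsymm]

end S8

namespace S8
variable {N : ℕ}

lemma pd_mul {f g : (Fin N → ℂ) → ℂ} {z : Fin N → ℂ} (hf : DifferentiableAt ℂ f z)
    (hg : DifferentiableAt ℂ g z) (i : Fin N) :
    pd (fun w => f w * g w) z i = pd f z i * g z + f z * pd g z i := by
  unfold pd
  rw [fderiv_fun_mul hf hg]
  simp [smul_eq_mul]
  ring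

lemma pd_sub {f g : (Fin N → ℂ) → ℂ} {z : Fin N → ℂ} (hf : DifferentiableAt ℂ f z)
    (hg : DifferentiableAt ℂ g z) (i : Fin N) :
    pd (fun w => f w - g w) z i = pd f z i - pd g z i := by
  unfold pd
  rw [fderiv_fun_sub hf hg]
  simp

lemma pd_sum {ι : Type*} (s : Finset ι) {F : ι → (Fin N → ℂ) → ℂ} {z : Fin N → ℂ}
    (hF : ∀ m ∈ s, DifferentiableAt ℂ (F m) z) (i : Fin N) :
    pd (fun w => ∑ m ∈ s, F m w) z i = ∑ m ∈ s, pd (F m) z i := by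
  unfold pd
  rw [fderiv_fun_sum hF]
  simp

lemma pd_coord (k : Fin N) (z : Fin N → ℂ) (i : Fin N) :
    pd (fun w => w k) z i = if k = i then 1 else 0 := by
  unfold pd
  have : (fun w : Fin N → ℂ => w k) = (ContinuousLinearMap.proj k : (Fin N → ℂ) →L[ℂ] ℂ) := rfl
  rw [this, ContinuousLinearMap.fderiv]
  simp [Pi.single_apply]

lemma differentiableAt_coord (k : Fin N) (z : Fin N → ℂ) :
    DifferentiableAt ℂ (fun w : Fin N → ℂ => w k) z :=
  (ContinuousLinearMap.proj k : (Fin N → ℂ) →L[ℂ] ℂ).differentiableAt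

/-- scaling: `pd (f ∘ (lam •)) z i = lam * pd f (lam • z) i` -/
lemma pd_scale {f : (Fin N → ℂ) → ℂ} (hf : Differentiable ℂ f) (lam : ℂ) (z : Fin N → ℂ)
    (i : Fin N) :
    pd (fun w => f (lam • w)) z i = lam * pd f (lam • z) i := by
  have hL : HasFDerivAt (fun w : Fin N → ℂ => lam • w)
      (lam • ContinuousLinearMap.id ℂ (Fin N → ℂ)) z :=
    ((ContinuousLinearMap.id ℂ (Fin N → ℂ)).hasFDerivAt).const_smul lam
  have h : HasFDerivAt (fun w => f (lam • w))
      ((fderiv ℂ f (lam • z)).comp (lam • ContinuousLinearMap.id ℂ (Fin N → ℂ))) z :=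
    (hf (lam • z)).hasFDerivAt.comp z hL
  rw [pd, h.fderiv]
  simp [pd, smul_eq_mul]

end S8

namespace S8
variable {n : ℕ}

def iA (m : Fin n) : Fin (2 * n + 1) := ⟨2 * (m : ℕ), by have := m.isLt; omega⟩
def iB (m : Fin n) : Fin (2 * n + 1) := ⟨2 * (m : ℕ) + 1, by have := m.isLt; omega⟩

@[simp] lemma iA_eq_iA_iff {m k : Fin n} : iA m = iA k ↔ m = k := by
  constructor
  · intro h
    have := congrArg Fin.val h
    simp only [iA] at this
    exact Fin.ext (by omega)
  · rintro rfl; rfl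

@[simp] lemma iB_eq_iB_iff {m k : Fin n} : iB m = iB k ↔ m = k := by
  constructor
  · intro h
    have := congrArg Fin.val h
    simp only [iB] at this
    exact Fin.ext (by omega)
  · rintro rfl; rfl

@[simp] lemma iA_ne_iB {m k : Fin n} : ¬ (iA m = iB k) := by
  intro h
  have := congrArg Fin.val h
  simp only [iA, iB] at this
  omega

@[simp] lemma iB_ne_iA {m k : Fin n} : ¬ (iB m = iA k) := by
  intro h
  have := congrArg Fin.val h
  simp only [iA, iB] at this
  omega

lemma pbCP_eq (f g : (Fin (2 * n + 1) → ℂ) → ℂ) :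
    pbCP n f g = fun z => ∑ m : Fin n, z (iA m) * z (iB m) *
      (pd f z (iA m) * pd g z (iB m) - pd f z (iB m) * pd g z (iA m)) := rfl

end S8

namespace S8
variable {n : ℕ}

lemma pbCP_differentiable {f g : (Fin (2 * n + 1) → ℂ) → ℂ} (hf : Differentiable ℂ f)
    (hg : Differentiable ℂ g) : Differentiable ℂ (pbCP n f g) := by
  rw [pbCP_eq]
  apply Differentiable.fun_sum
  intro m _
  have hca : Differentiable ℂ (fun w : Fin (2*n+1) → ℂ => w (iA m)) :=
    fun x => differentiableAt_coord (iA m) x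
  have hcb : Differentiable ℂ (fun w : Fin (2*n+1) → ℂ => w (iB m)) :=
    fun x => differentiableAt_coord (iB m) x
  exact ((hca.mul hcb).mul
    (((differentiable_pd hf (iA m)).mul (differentiable_pd hg (iB m))).sub
      ((differentiable_pd hf (iB m)).mul (differentiable_pd hg (iA m)))))

/-- summand of the derivative of the bracket -/
noncomputable def sTerm (f g : (Fin (2 * n + 1) → ℂ) → ℂ) (z : Fin (2 * n + 1) → ℂ)
    (i : Fin (2 * n + 1)) (m : Fin n) : ℂ :=
  (if iA m = i then 1 else 0) * z (iB m) *
      (pd f z (iA m) * pd g z (iB m) - pd f z (iB m) * pd g z (iA m)) +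
  z (iA m) * (if iB m = i then 1 else 0) *
      (pd f z (iA m) * pd g z (iB m) - pd f z (iB m) * pd g z (iA m)) +
  z (iA m) * z (iB m) *
      (pd (fun w => pd f w (iA m)) z i * pd g z (iB m) +
       pd f z (iA m) * pd (fun w => pd g w (iB m)) z i -
       pd (fun w => pd f w (iB m)) z i * pd g z (iA m) -
       pd f z (iB m) * pd (fun w => pd g w (iA m)) z i)

lemma pd_pbCP {f g : (Fin (2 * n + 1) → ℂ) → ℂ} (hf : Differentiable ℂ f)
    (hg : Differentiable ℂ g) (z : Fin (2 * n + 1) → ℂ) (i : Fin (2 * n + 1)) :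
    pd (pbCP n f g) z i = ∑ m : Fin n, sTerm f g z i m := by
  rw [pbCP_eq]
  rw [pd_sum (F := fun m w => w (iA m) * w (iB m) *
      (pd f w (iA m) * pd g w (iB m) - pd f w (iB m) * pd g w (iA m))) Finset.univ (fun m _ =>
    (((differentiableAt_coord (iA m) z).mul (differentiableAt_coord (iB m) z)).mul
    ((((differentiable_pd hf (iA m)) z).mul ((differentiable_pd hg (iB m)) z)).sub
      (((differentiable_pd hf (iB m)) z).mul ((differentiable_pd hg (iA m)) z)))))]
  refine Finset.sum_congr rfl fun m _ => ?_
  have hca := differentiableAt_coord (iA m) z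
  have hcb := differentiableAt_coord (iB m) z
  have hfa := (differentiable_pd hf (iA m)) z
  have hfb := (differentiable_pd hf (iB m)) z
  have hga := (differentiable_pd hg (iA m)) z
  have hgb := (differentiable_pd hg (iB m)) z
  rw [pd_mul (hca.fun_mul hcb) (((hfa.fun_mul hgb)).fun_sub ((hfb.fun_mul hga)))]
  rw [pd_mul hca hcb]
  rw [pd_sub (hfa.fun_mul hgb) (hfb.fun_mul hga)]
  rw [pd_mul hfa hgb, pd_mul hfb hga]
  rw [pd_coord, pd_coord]
  unfold sTerm
  ring

end S8

namespace S8
variable {n : ℕ}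

noncomputable def Phi (f g h : (Fin (2 * n + 1) → ℂ) → ℂ) (z : Fin (2 * n + 1) → ℂ)
    (k m : Fin n) : ℂ :=
  z (iA k) * z (iB k) *
    (pd f z (iA k) * sTerm g h z (iB k) m - pd f z (iB k) * sTerm g h z (iA k) m)

lemma pbCP_pbCP_eq {f g h : (Fin (2 * n + 1) → ℂ) → ℂ} (hg : Differentiable ℂ g)
    (hh : Differentiable ℂ h) (z : Fin (2 * n + 1) → ℂ) :
    pbCP n f (pbCP n g h) z = ∑ k : Fin n, ∑ m : Fin n, Phi f g h z k m := by
  rw [pbCP_eq]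
  refine Finset.sum_congr rfl fun k _ => ?_
  rw [pd_pbCP hg hh z (iA k), pd_pbCP hg hh z (iB k)]
  rw [Finset.mul_sum, Finset.mul_sum, ← Finset.sum_sub_distrib, Finset.mul_sum]
  rfl

lemma Phi_antisymm {f g h : (Fin (2 * n + 1) → ℂ) → ℂ} (hf : Differentiable ℂ f)
    (hg : Differentiable ℂ g) (hh : Differentiable ℂ h) (z : Fin (2 * n + 1) → ℂ)
    (k m : Fin n) :
    (Phi f g h z k m + Phi g h f z k m + Phi h f g z k m) +
    (Phi f g h z m k + Phi g h f z m k + Phi h f g z m k) = 0 := by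
  by_cases hkm : k = m
  · subst hkm
    simp only [Phi, sTerm, iA_eq_iA_iff, iB_eq_iB_iff, iA_ne_iB, iB_ne_iA, if_true, if_false,
      ite_true, ite_false]
    rw [pd_comm hf z (iA k) (iB k), pd_comm hg z (iA k) (iB k), pd_comm hh z (iA k) (iB k)]
    ring
  · have hmk : m ≠ k := fun h' => hkm h'.symm
    simp only [Phi, sTerm, iA_eq_iA_iff, iB_eq_iB_iff, iA_ne_iB, iB_ne_iA, hkm, hmk,
      if_false, ite_false, if_true, ite_true]
    rw [pd_comm hf z (iA m) (iA k), pd_comm hf z (iA m) (iB k),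
        pd_comm hf z (iB m) (iA k), pd_comm hf z (iB m) (iB k),
        pd_comm hg z (iA m) (iA k), pd_comm hg z (iA m) (iB k),
        pd_comm hg z (iB m) (iA k), pd_comm hg z (iB m) (iB k),
        pd_comm hh z (iA m) (iA k), pd_comm hh z (iA m) (iB k),
        pd_comm hh z (iB m) (iA k), pd_comm hh z (iB m) (iB k)]
    ring

end S8

namespace S8
variable {n : ℕ}

lemma scaling_invariance {f g : (Fin (2 * n + 1) → ℂ) → ℂ} (hf : Differentiable ℂ f)
    (hg : Differentiable ℂ g) (lam : ℂ) :
    pbCP n (fun z => f (lam • z)) (fun z => g (lam • z)) = fun z => pbCP n f g (lam • z) := by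
  funext z
  rw [pbCP_eq, pbCP_eq]
  refine Finset.sum_congr rfl fun m _ => ?_
  rw [pd_scale hf lam z (iA m), pd_scale hg lam z (iB m),
      pd_scale hf lam z (iB m), pd_scale hg lam z (iA m)]
  simp only [Pi.smul_apply, smul_eq_mul]
  ring

lemma jacobi {f g h : (Fin (2 * n + 1) → ℂ) → ℂ} (hf : Differentiable ℂ f)
    (hg : Differentiable ℂ g) (hh : Differentiable ℂ h) :
    pbCP n f (pbCP n g h) + pbCP n g (pbCP n h f) + pbCP n h (pbCP n f g) = 0 := by
  funext z
  simp only [Pi.add_apply, Pi.zero_apply]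
  rw [pbCP_pbCP_eq hg hh z, pbCP_pbCP_eq hh hf z, pbCP_pbCP_eq hf hg z]
  simp only [← Finset.sum_add_distrib]
  set S := ∑ k : Fin n, ∑ m : Fin n,
    (Phi f g h z k m + Phi g h f z k m + Phi h f g z k m) with hS
  have hswap : S = ∑ k : Fin n, ∑ m : Fin n,
      (Phi f g h z m k + Phi g h f z m k + Phi h f g z m k) := Finset.sum_comm
  have h2 : S + S = 0 := by
    nth_rewrite 2 [hswap]
    rw [← Finset.sum_add_distrib]
    simp only [← Finset.sum_add_distrib]
    exact Finset.sum_eq_zero fun k _ => Finset.sum_eq_zero fun m _ =>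
      Phi_antisymm hf hg hh z k m
  exact add_self_eq_zero.mp h2

end S8


theorem stmt8 (n : ℕ) :
    (∀ lam : ℂ, lam ≠ 0 →
      ∀ f g : (Fin (2 * n + 1) → ℂ) → ℂ, Differentiable ℂ f → Differentiable ℂ g →
        pbCP n (fun z => f (lam • z)) (fun z => g (lam • z)) =
          fun z => pbCP n f g (lam • z)) ∧
    (∀ f g h : (Fin (2 * n + 1) → ℂ) → ℂ,
      Differentiable ℂ f → Differentiable ℂ g → Differentiable ℂ h →
        pbCP n f (pbCP n g h) + pbCP n g (pbCP n h f) + pbCP n h (pbCP n f g) = 0) := by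
  constructor
  · intro lam _ f g hf hg
    exact S8.scaling_invariance hf hg lam
  · intro f g h hf hg hh
    exact S8.jacobi hf hg hh
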